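/- Let G = (V,E) be a connected simple graph and let v_1, v_2, …, v_ℓ ∈ V with ℓ > 4 be distinct vertices with pairwise equal open neighborhoods N(v_1) = N(v_2) = … = N(v_ℓ). Then δ(G[V \ {v_5, …, v_ℓ}]) = δ(G), i.e., deleting all but four of these vertices does not change the hyperbolicity. -/

import Mathlib

open SimpleGraph

/-- The four-point quantity δ(a,b,c,d): the difference between the largest and the
second-largest of the three distance sums D1, D2, D3. -/
noncomputable def delta4 {V : Type*} (G : SimpleGraph V) (a b c d : V) : ℕ :=
  let D1 := G.dist a b + G.dist c d
  let D2 := G.dist a c + G.dist b d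
  let D3 := G.dist a d + G.dist b c
  max (max D1 D2) D3 - min (min (max D1 D2) (max D2 D3)) (max D1 D3)

/-- The hyperbolicity of a graph: the maximum of δ(a,b,c,d) over all quadruples. -/
noncomputable def hyperbolicity {V : Type*} (G : SimpleGraph V) : ℕ :=
  sSup {n | ∃ a b c d, delta4 G a b c d = n}


lemma dist_eq_of_twin {V : Type*} {G : SimpleGraph V} (hconn : G.Connected) {u w x : V}
    (h : G.neighborSet u = G.neighborSet w) (hxu : x ≠ u) (hxw : x ≠ w) :
    G.dist u x = G.dist w x := by
  have key : ∀ u w : V, G.neighborSet u = G.neighborSet w → x ≠ w →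
      G.dist u x ≤ G.dist w x := by
    intro u w h hxw
    obtain ⟨p, hp⟩ := (hconn w x).exists_walk_length_eq_dist
    cases p with
    | nil => exact absurd rfl hxw.symm
    | @cons _ y _ hadj q =>
      have h2 : G.Adj u y := by
        have : y ∈ G.neighborSet w := hadj
        rw [← h] at this; exact this
      calc G.dist u x ≤ (Walk.cons h2 q).length := dist_le _
        _ = G.dist w x := by simpa using hp
  exact le_antisymm (key u w h hxw) (key w u h.symm hxu)

lemma induce_dist_eq {V : Type*} {G : SimpleGraph V} (hconn : G.Connected)
    {ℓ : ℕ} (hℓ : 4 < ℓ) (v : Fin ℓ → V) (hinj : Function.Injective v)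
    (htwin : ∀ i j : Fin ℓ, G.neighborSet (v i) = G.neighborSet (v j))
    {a b : V} (ha : a ∈ {u : V | ∀ i : Fin ℓ, 4 ≤ (i : ℕ) → u ≠ v i})
    (hb : b ∈ {u : V | ∀ i : Fin ℓ, 4 ≤ (i : ℕ) → u ≠ v i}) :
    (G.induce {u : V | ∀ i : Fin ℓ, 4 ≤ (i : ℕ) → u ≠ v i}).dist ⟨a, ha⟩ ⟨b, hb⟩
      = G.dist a b := by
  classical
  let S : Set V := {u : V | ∀ i : Fin ℓ, 4 ≤ (i : ℕ) → u ≠ v i}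
  have hnonadj : ∀ i j : Fin ℓ, ¬ G.Adj (v i) (v j) := by
    intro i j hadj
    have : v j ∈ G.neighborSet (v i) := hadj
    rw [htwin i j] at this
    exact G.irrefl this
  have hv0S : ∀ j : Fin ℓ, (j : ℕ) < 4 → v j ∈ S := by
    intro j hj i hi heq
    exact absurd (hinj heq) (by intro h; subst h; omega)
  let f : V → V := fun x => if ∃ i : Fin ℓ, 4 ≤ (i : ℕ) ∧ x = v i
      then v (⟨0, by omega⟩ : Fin ℓ) else x
  have hfS : ∀ x : V, f x ∈ S := by
    intro x
    by_cases h : ∃ i : Fin ℓ, 4 ≤ (i : ℕ) ∧ x = v i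
    · simp only [f, if_pos h]
      exact hv0S _ (by simp)
    · simp only [f, if_neg h]
      intro i hi heq; exact h ⟨i, hi, heq⟩
  have hadjf : ∀ x y : V, G.Adj x y → G.Adj (f x) (f y) := by
    intro x y hadj
    by_cases hx : ∃ i : Fin ℓ, 4 ≤ (i : ℕ) ∧ x = v i
    · obtain ⟨i, hi, hxe⟩ := hx
      have hy : ¬ ∃ j : Fin ℓ, 4 ≤ (j : ℕ) ∧ y = v j := by
        rintro ⟨j, hj, rfl⟩
        rw [hxe] at hadj
        exact hnonadj i j hadj
      have hx' : ∃ i : Fin ℓ, 4 ≤ (i : ℕ) ∧ x = v i := ⟨i, hi, hxe⟩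
      simp only [f, if_pos hx', if_neg hy]
      have : y ∈ G.neighborSet (v i) := by rw [← hxe]; exact hadj
      rw [htwin i ⟨0, by omega⟩] at this
      exact this
    · by_cases hy : ∃ j : Fin ℓ, 4 ≤ (j : ℕ) ∧ y = v j
      · obtain ⟨j, hj, hye⟩ := hy
        have hy' : ∃ j : Fin ℓ, 4 ≤ (j : ℕ) ∧ y = v j := ⟨j, hj, hye⟩
        simp only [f, if_neg hx, if_pos hy']
        have : x ∈ G.neighborSet (v j) := by rw [← hye]; exact hadj.symm
        rw [htwin j ⟨0, by omega⟩] at this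
        exact this.symm
      · simpa only [f, if_neg hx, if_neg hy] using hadj
  let φ : G →g (G.induce S) :=
    { toFun := fun x => ⟨f x, hfS x⟩
      map_rel' := fun h => hadjf _ _ h }
  have hfid : ∀ x : V, x ∈ S → f x = x := by
    intro x hx
    simp only [f]
    rw [if_neg]
    rintro ⟨i, hi, rfl⟩
    exact hx i hi rfl
  have hφa : φ a = ⟨a, ha⟩ := Subtype.ext (hfid a ha)
  have hφb : φ b = ⟨b, hb⟩ := Subtype.ext (hfid b hb)
  obtain ⟨p, hp⟩ := (hconn a b).exists_walk_length_eq_dist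
  have hle : (G.induce S).dist ⟨a, ha⟩ ⟨b, hb⟩ ≤ G.dist a b := by
    have := dist_le ((p.map φ).copy hφa hφb)
    simpa [hp] using this
  have hreach : (G.induce S).Reachable ⟨a, ha⟩ ⟨b, hb⟩ :=
    ⟨(p.map φ).copy hφa hφb⟩
  obtain ⟨q, hq⟩ := hreach.exists_walk_length_eq_dist
  have hge : G.dist a b ≤ (G.induce S).dist ⟨a, ha⟩ ⟨b, hb⟩ := by
    have := dist_le (q.map (SimpleGraph.Embedding.induce S).toHom)
    rw [Walk.length_map, hq] at this; exact this
  exact le_antisymm hle hge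

lemma delta4_congr {V W : Type*} {G : SimpleGraph V} {G' : SimpleGraph W}
    {a b c d : V} {a' b' c' d' : W}
    (h1 : G.dist a b = G'.dist a' b') (h2 : G.dist c d = G'.dist c' d')
    (h3 : G.dist a c = G'.dist a' c') (h4 : G.dist b d = G'.dist b' d')
    (h5 : G.dist a d = G'.dist a' d') (h6 : G.dist b c = G'.dist b' c') :
    delta4 G a b c d = delta4 G' a' b' c' d' := by
  simp only [delta4]
  rw [h1, h2, h3, h4, h5, h6]

lemma replace_quad {V : Type*} {G : SimpleGraph V} (hconn : G.Connected)
    {ℓ : ℕ} (hℓ : 4 < ℓ) (v : Fin ℓ → V) (hinj : Function.Injective v)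
    (htwin : ∀ i j : Fin ℓ, G.neighborSet (v i) = G.neighborSet (v j))
    (a b c d : V) : ∃ a' b' c' d' : V,
      (∀ i : Fin ℓ, 4 ≤ (i : ℕ) → a' ≠ v i) ∧
      (∀ i : Fin ℓ, 4 ≤ (i : ℕ) → b' ≠ v i) ∧
      (∀ i : Fin ℓ, 4 ≤ (i : ℕ) → c' ≠ v i) ∧
      (∀ i : Fin ℓ, 4 ≤ (i : ℕ) → d' ≠ v i) ∧
      delta4 G a' b' c' d' = delta4 G a b c d := by
  classical
  let del : V → Prop := fun x => ∃ i : Fin ℓ, 4 ≤ (i : ℕ) ∧ x = v i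
  have hdelS : ∀ x : V, ¬ del x → (∀ i : Fin ℓ, 4 ≤ (i : ℕ) → x ≠ v i) := by
    intro x hx i hi heq; exact hx ⟨i, hi, heq⟩
  suffices key : ∀ n (a b c d : V),
      (({a, b, c, d} : Finset V).filter del).card ≤ n →
      ∃ a' b' c' d' : V,
      (∀ i : Fin ℓ, 4 ≤ (i : ℕ) → a' ≠ v i) ∧
      (∀ i : Fin ℓ, 4 ≤ (i : ℕ) → b' ≠ v i) ∧
      (∀ i : Fin ℓ, 4 ≤ (i : ℕ) → c' ≠ v i) ∧
      (∀ i : Fin ℓ, 4 ≤ (i : ℕ) → d' ≠ v i) ∧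
      delta4 G a' b' c' d' = delta4 G a b c d by
    exact key _ a b c d le_rfl
  have base : ∀ a b c d : V, (({a, b, c, d} : Finset V).filter del) = ∅ →
      ∃ a' b' c' d' : V,
      (∀ i : Fin ℓ, 4 ≤ (i : ℕ) → a' ≠ v i) ∧
      (∀ i : Fin ℓ, 4 ≤ (i : ℕ) → b' ≠ v i) ∧
      (∀ i : Fin ℓ, 4 ≤ (i : ℕ) → c' ≠ v i) ∧
      (∀ i : Fin ℓ, 4 ≤ (i : ℕ) → d' ≠ v i) ∧
      delta4 G a' b' c' d' = delta4 G a b c d := by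
    intro a b c d hemp
    have hnone : ∀ y ∈ ({a, b, c, d} : Finset V), ¬ del y := by
      intro y hy hdy
      have : y ∈ (({a, b, c, d} : Finset V).filter del) := Finset.mem_filter.mpr ⟨hy, hdy⟩
      simp [hemp] at this
    exact ⟨a, b, c, d,
      hdelS a (hnone a (by simp)), hdelS b (hnone b (by simp)),
      hdelS c (hnone c (by simp)), hdelS d (hnone d (by simp)), rfl⟩
  intro n
  induction n with
  | zero =>
    intro a b c d h
    exact base a b c d (Finset.card_eq_zero.mp (Nat.le_zero.mp h))
  | succ n ih =>
    intro a b c d h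
    by_cases h0 : (({a, b, c, d} : Finset V).filter del) = ∅
    · exact base a b c d h0
    · obtain ⟨x, hxmem⟩ := Finset.nonempty_iff_ne_empty.mpr h0
      have hxset : x ∈ ({a, b, c, d} : Finset V) := (Finset.mem_filter.mp hxmem).1
      obtain ⟨i, hi4, hxe⟩ := (Finset.mem_filter.mp hxmem).2
      -- choose a surviving twin not among the other quadruple values
      have hexj : ∃ j : Fin ℓ, (j : ℕ) < 4 ∧ v j ∉ ({a, b, c, d} : Finset V) \ {x} := by
        by_contra hcon
        push_neg at hcon
        set T : Finset V := ({a, b, c, d} : Finset V) \ {x} with hT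
        have hTcard : T.card ≤ 3 := by
          have h1 : ({a, b, c, d} : Finset V).card ≤ 4 := by
            apply le_trans (Finset.card_insert_le _ _)
            apply Nat.succ_le_succ
            apply le_trans (Finset.card_insert_le _ _)
            apply Nat.succ_le_succ
            apply le_trans (Finset.card_insert_le _ _)
            simp
          have h2 : T.card = ({a, b, c, d} : Finset V).card - 1 := by
            rw [hT, Finset.sdiff_singleton_eq_erase, Finset.card_erase_of_mem hxset]
          omega
        let F : Finset V := Finset.univ.image (fun j : Fin 4 => v ⟨j.1, by omega⟩)
        have hFsub : F ⊆ T := by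
          intro y hy
          simp only [F, Finset.mem_image, Finset.mem_univ, true_and] at hy
          obtain ⟨j, rfl⟩ := hy
          exact hcon ⟨j.1, by omega⟩ (by simpa using j.2)
        have hFcard : F.card = 4 := by
          rw [Finset.card_image_of_injective]
          · simp
          · intro j k hjk
            have := hinj hjk
            exact Fin.ext (by simpa [Fin.ext_iff] using this)
        have := Finset.card_le_card hFsub
        omega
      obtain ⟨j, hj4, hjT⟩ := hexj
      let r : V → V := fun y => if y = x then v j else y
      have hjne : ∀ q : V, q ∈ ({a, b, c, d} : Finset V) → q ≠ x → q ≠ v j := by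
        intro q hq hqx heq
        exact hjT (by rw [← heq]; exact Finset.mem_sdiff.mpr ⟨hq, by simp [hqx]⟩)
      have hdist : ∀ p q : V, p ∈ ({a, b, c, d} : Finset V) →
          q ∈ ({a, b, c, d} : Finset V) → G.dist (r p) (r q) = G.dist p q := by
        intro p q hp hq
        by_cases hpx : p = x <;> by_cases hqx : q = x
        · subst hpx; subst hqx
          simp [r, SimpleGraph.dist_self]
        · have h1 : r p = v j := by simp [r, hpx]
          have h2 : r q = q := by simp [r, hqx]
          rw [h1, h2, hpx, hxe]
          exact dist_eq_of_twin hconn (htwin j i) (hjne q hq hqx)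
            (by rw [← hxe]; exact hqx)
        · have h1 : r p = p := by simp [r, hpx]
          have h2 : r q = v j := by simp [r, hqx]
          rw [h1, h2, hqx, hxe]
          calc G.dist p (v j) = G.dist (v j) p := SimpleGraph.dist_comm
            _ = G.dist (v i) p := dist_eq_of_twin hconn (htwin j i)
                (hjne p hp hpx) (by rw [← hxe]; exact hpx)
            _ = G.dist p (v i) := SimpleGraph.dist_comm
        · simp [r, hpx, hqx]
      have hmeas : (({r a, r b, r c, r d} : Finset V).filter del).card ≤ n := by
        have hsub : (({r a, r b, r c, r d} : Finset V).filter del) ⊆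
            (({a, b, c, d} : Finset V).filter del).erase x := by
          intro y hy
          obtain ⟨hy1, hy2⟩ := Finset.mem_filter.mp hy
          have hnj : ¬ del (v j) := by
            rintro ⟨k, hk4, hke⟩
            have := hinj hke
            subst this; omega
          have hr : ∀ z, z ∈ ({a, b, c, d} : Finset V) → del (r z) →
              r z ∈ ({a, b, c, d} : Finset V) ∧ r z ≠ x := by
            intro z hz hdz
            by_cases hh : z = x
            · exact absurd (by simpa [r, hh] using hdz) hnj
            · simp only [r, if_neg hh]; exact ⟨hz, hh⟩
          simp only [Finset.mem_insert, Finset.mem_singleton] at hy1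
          have : y ∈ ({a, b, c, d} : Finset V) ∧ y ≠ x := by
            rcases hy1 with rfl | rfl | rfl | rfl
            · exact hr a (by simp) hy2
            · exact hr b (by simp) hy2
            · exact hr c (by simp) hy2
            · exact hr d (by simp) hy2
          exact Finset.mem_erase.mpr ⟨this.2, Finset.mem_filter.mpr ⟨this.1, hy2⟩⟩
        have h1 := Finset.card_le_card hsub
        have h2 := Finset.card_erase_of_mem hxmem
        have h3 : 1 ≤ (({a, b, c, d} : Finset V).filter del).card :=
          Finset.card_pos.mpr ⟨x, hxmem⟩
        omega
      obtain ⟨a', b', c', d', hA, hB, hC, hD, heq⟩ := ih (r a) (r b) (r c) (r d) hmeas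
      refine ⟨a', b', c', d', hA, hB, hC, hD, heq.trans ?_⟩
      exact delta4_congr
        (hdist a b (by simp) (by simp)) (hdist c d (by simp) (by simp))
        (hdist a c (by simp) (by simp)) (hdist b d (by simp) (by simp))
        (hdist a d (by simp) (by simp)) (hdist b c (by simp) (by simp))

/-- Given more than four distinct vertices v_1, ..., v_ℓ with pairwise equal open
neighborhoods, deleting all but the first four of them does not change the hyperbolicity. -/
theorem hyperbolicity_delete_extra_twins {V : Type*} [Fintype V] (G : SimpleGraph V)
    (hconn : G.Connected) (ℓ : ℕ) (hℓ : 4 < ℓ) (v : Fin ℓ → V)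
    (hinj : Function.Injective v)
    (htwin : ∀ i j : Fin ℓ, G.neighborSet (v i) = G.neighborSet (v j)) :
    hyperbolicity (G.induce {u : V | ∀ i : Fin ℓ, 4 ≤ (i : ℕ) → u ≠ v i}) =
      hyperbolicity G := by
  classical
  have hset : {n | ∃ a b c d,
        delta4 (G.induce {u : V | ∀ i : Fin ℓ, 4 ≤ (i : ℕ) → u ≠ v i}) a b c d = n}
      = {n | ∃ a b c d, delta4 G a b c d = n} := by
    ext n
    constructor
    · rintro ⟨a, b, c, d, rfl⟩
      refine ⟨a.1, b.1, c.1, d.1, ?_⟩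
      exact (delta4_congr
        (induce_dist_eq hconn hℓ v hinj htwin a.2 b.2)
        (induce_dist_eq hconn hℓ v hinj htwin c.2 d.2)
        (induce_dist_eq hconn hℓ v hinj htwin a.2 c.2)
        (induce_dist_eq hconn hℓ v hinj htwin b.2 d.2)
        (induce_dist_eq hconn hℓ v hinj htwin a.2 d.2)
        (induce_dist_eq hconn hℓ v hinj htwin b.2 c.2)).symm
    · rintro ⟨a, b, c, d, rfl⟩
      obtain ⟨a', b', c', d', hA, hB, hC, hD, heq⟩ :=
        replace_quad hconn hℓ v hinj htwin a b c d
      refine ⟨⟨a', hA⟩, ⟨b', hB⟩, ⟨c', hC⟩, ⟨d', hD⟩, ?_⟩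
      rw [delta4_congr
        (induce_dist_eq hconn hℓ v hinj htwin hA hB)
        (induce_dist_eq hconn hℓ v hinj htwin hC hD)
        (induce_dist_eq hconn hℓ v hinj htwin hA hC)
        (induce_dist_eq hconn hℓ v hinj htwin hB hD)
        (induce_dist_eq hconn hℓ v hinj htwin hA hD)
        (induce_dist_eq hconn hℓ v hinj htwin hB hC)]
      exact heq
  unfold hyperbolicity
  rw [hset]
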